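/- Let (H,R) be a quasitriangular crossed Hopf π-coalgebra with Drinfeld elements u_α = (s_{α⁻¹}∘φ_α)(ζ_{(α⁻¹).i}) ξ_{(α).i} ∈ H_α. Then each u_α is invertible, with inverse u_α⁻¹ = s_α⁻¹(ζ̃_{(α⁻¹).i}) ξ̃_{(α).i}, where R⁻¹_{α,α⁻¹} = ξ̃_{(α).i} ⊗ ζ̃_{(α⁻¹).i}. -/

import Mathlib

/- Crossed Hopf π-coalgebras (Turaev coalgebras). -/

open TensorProduct

universe u

variable (k : Type u) [Field k] (π : Type u) [Group π]

/-- Cast along an equality of indices, as a `k`-linear map. -/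
def lcast (A : π → Type u) [∀ α, Ring (A α)] [∀ α, Algebra k (A α)]
    {α β : π} (h : α = β) : A α →ₗ[k] A β where
  toFun x := cast (congrArg A h) x
  map_add' := by subst h; intro x y; rfl
  map_smul' := by subst h; intro c x; rfl

/-- A crossed Hopf `π`-coalgebra (Turaev coalgebra) structure on a family of
`k`-algebras `A α`. -/
structure TCoalgStruct (A : π → Type u) [∀ α, Ring (A α)] [∀ α, Algebra k (A α)] where
  /-- comultiplication -/
  Δ : ∀ α β : π, A (α * β) →ₐ[k] (A α ⊗[k] A β)
  /-- counit -/
  ε : A 1 →ₐ[k] k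
  /-- antipode -/
  s : ∀ α : π, A α →ₗ[k] A α⁻¹
  /-- conjugation -/
  φ : ∀ β α : π, A α →ₐ[k] A (β * α * β⁻¹)
  φ_bij : ∀ β α : π, Function.Bijective (φ β α)
  coassoc : ∀ (α β γ : π) (h : A (α * β * γ)),
    (TensorProduct.assoc k (A α) (A β) (A γ))
        (TensorProduct.map (Δ α β).toLinearMap LinearMap.id (Δ (α * β) γ h)) =
      TensorProduct.map LinearMap.id (Δ β γ).toLinearMap
        (Δ α (β * γ) (cast (congrArg A (mul_assoc α β γ)) h))
  counit_left : ∀ (α : π) (h : A (1 * α)),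
    TensorProduct.lid k (A α)
        (TensorProduct.map (ε).toLinearMap LinearMap.id (Δ 1 α h)) =
      cast (congrArg A (one_mul α)) h
  counit_right : ∀ (α : π) (h : A (α * 1)),
    TensorProduct.rid k (A α)
        (TensorProduct.map LinearMap.id (ε).toLinearMap (Δ α 1 h)) =
      cast (congrArg A (mul_one α)) h
  antipode_right : ∀ (α : π) (h : A (α * α⁻¹)),
    LinearMap.mul' k (A α)
        (TensorProduct.map LinearMap.id
          ((lcast k π A (inv_inv α)).comp (s α⁻¹)) (Δ α α⁻¹ h)) =
      algebraMap k (A α) (ε (cast (congrArg A (by group : α * α⁻¹ = 1)) h))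
  antipode_left : ∀ (α : π) (h : A (α⁻¹ * α)),
    LinearMap.mul' k (A α)
        (TensorProduct.map ((lcast k π A (inv_inv α)).comp (s α⁻¹)) LinearMap.id
          (Δ α⁻¹ α h)) =
      algebraMap k (A α) (ε (cast (congrArg A (by group : α⁻¹ * α = 1)) h))
  φ_mul : ∀ (β γ α : π) (h : A α),
    cast (congrArg A (by group : β * (γ * α * γ⁻¹) * β⁻¹ = β * γ * α * (β * γ)⁻¹))
        (φ β (γ * α * γ⁻¹) (φ γ α h)) = φ (β * γ) α h
  φ_comul : ∀ (γ α β : π) (h : A (α * β)),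
    TensorProduct.map (φ γ α).toLinearMap (φ γ β).toLinearMap (Δ α β h) =
      Δ (γ * α * γ⁻¹) (γ * β * γ⁻¹)
        (cast (congrArg A (by group : γ * (α * β) * γ⁻¹ = γ * α * γ⁻¹ * (γ * β * γ⁻¹)))
          (φ γ (α * β) h))
  φ_counit : ∀ (γ : π) (h : A 1),
    ε (cast (congrArg A (by group : γ * 1 * γ⁻¹ = 1)) (φ γ 1 h)) = ε h

/-- A quasitriangular structure (universal R-matrix) on a crossed Hopf
`π`-coalgebra. -/
structure QTStruct (A : π → Type u) [∀ α, Ring (A α)] [∀ α, Algebra k (A α)]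
    (T : TCoalgStruct k π A) where
  /-- the universal R-matrix -/
  R : ∀ α β : π, A α ⊗[k] A β
  /-- its inverse -/
  Rinv : ∀ α β : π, A α ⊗[k] A β
  R_inv_left : ∀ α β : π, Rinv α β * R α β = 1
  R_inv_right : ∀ α β : π, R α β * Rinv α β = 1
  R_rel1 : ∀ (α β : π) (h : A (α * β)),
    R α β * T.Δ α β h =
      ((TensorProduct.comm k (A β) (A α))
        (TensorProduct.map
          ((lcast k π A (by group : α⁻¹ * (α * β * α⁻¹) * α⁻¹⁻¹ = β)).comp
            (T.φ α⁻¹ (α * β * α⁻¹)).toLinearMap) LinearMap.id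
          (T.Δ (α * β * α⁻¹) α
            (cast (congrArg A (by group : α * β = α * β * α⁻¹ * α)) h)))) * R α β
  R_rel2 : ∀ α β γ : π,
    TensorProduct.map LinearMap.id (T.Δ β γ).toLinearMap (R α (β * γ)) =
      (TensorProduct.map LinearMap.id ((TensorProduct.mk k (A β) (A γ)) 1) (R α γ)) *
      (TensorProduct.map LinearMap.id ((TensorProduct.mk k (A β) (A γ)).flip 1) (R α β))
  R_rel3 : ∀ α β γ : π,
    TensorProduct.map (T.Δ α β).toLinearMap LinearMap.id (R (α * β) γ) =
      (TensorProduct.map ((TensorProduct.mk k (A α) (A β)).flip 1) LinearMap.id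
        (TensorProduct.map
          ((lcast k π A (by group : β * (β⁻¹ * α * β) * β⁻¹ = α)).comp
            (T.φ β (β⁻¹ * α * β)).toLinearMap) LinearMap.id (R (β⁻¹ * α * β) γ))) *
      (TensorProduct.map ((TensorProduct.mk k (A α) (A β)) 1) LinearMap.id (R β γ))
  R_phi : ∀ α β γ : π,
    TensorProduct.map (T.φ α β).toLinearMap (T.φ α γ).toLinearMap (R β γ) =
      R (α * β * α⁻¹) (α * γ * α⁻¹)

/-- The `α`-th Drinfeld element `u_α = (s_{α⁻¹} ∘ φ_α)(ζ_{(α⁻¹).i}) · ξ_{(α).i}`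
of a quasitriangular crossed Hopf `π`-coalgebra. -/
noncomputable def drinfeld
    (A : π → Type u) [∀ α, Ring (A α)] [∀ α, Algebra k (A α)]
    (T : TCoalgStruct k π A) (Q : QTStruct k π A T) (α : π) : A α :=
  LinearMap.mul' k (A α)
    ((TensorProduct.comm k (A α) (A α))
      (TensorProduct.map LinearMap.id
        ((lcast k π A (inv_inv α)).comp ((T.s α⁻¹).comp
          ((lcast k π A (by group : α * α⁻¹ * α⁻¹ = α⁻¹)).comp
            (T.φ α α⁻¹).toLinearMap)))
        (Q.R α α⁻¹)))


/-! ### Auxiliary machinery for the proof -/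

section Aux

variable {k : Type u} [Field k] {π : Type u} [Group π]
variable {A : π → Type u} [∀ α, Ring (A α)] [∀ α, Algebra k (A α)]

namespace TProof

lemma lcast_apply {α β : π} (e : α = β) (x : A α) :
    lcast k π A e x = cast (congrArg A e) x := rfl

lemma cast_eq_lcast {α β : π} (e : α = β) (x : A α) :
    cast (congrArg A e) x = lcast k π A e x := rfl

@[simp] lemma lcast_refl {α : π} (e : α = α) (x : A α) : lcast k π A e x = x := by
  simp only [lcast_apply]; exact cast_eq _ x

lemma lcast_lcast {α β γ : π} (e₁ : α = β) (e₂ : β = γ) (x : A α) :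
    lcast k π A e₂ (lcast k π A e₁ x) = lcast k π A (e₁.trans e₂) x := by
  subst e₁; subst e₂; rfl

lemma lcast_mul {α β : π} (e : α = β) (x y : A α) :
    lcast k π A e (x * y) = lcast k π A e x * lcast k π A e y := by subst e; rfl

lemma lcast_one {α β : π} (e : α = β) : lcast k π A e (1 : A α) = 1 := by subst e; rfl

lemma lcast_inj {α β : π} (e : α = β) {x y : A α}
    (h : lcast k π A e x = lcast k π A e y) : x = y := by subst e; simpa using h

variable (T : TCoalgStruct k π A)

lemma s_lcast {α β : π} (e : α = β) (x : A α) :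
    T.s β (lcast k π A e x) = lcast k π A (congrArg Inv.inv e) (T.s α x) := by
  subst e; simp

lemma φ_lcast (γ : π) {α β : π} (e : α = β) (x : A α) :
    T.φ γ β (lcast k π A e x) =
      lcast k π A (by rw [e]) (T.φ γ α x) := by
  subst e; simp

lemma φ_outer {γ γ' : π} (e : γ = γ') (α : π) (x : A α) :
    T.φ γ' α x = lcast k π A (by rw [e]) (T.φ γ α x) := by
  subst e; simp

lemma Δ_lcast {β β' γ γ' : π} (e₁ : β = β') (e₂ : γ = γ') (e : β * γ = β' * γ')
    (h : A (β * γ)) :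
    T.Δ β' γ' (lcast k π A e h) =
      TensorProduct.map (lcast k π A e₁) (lcast k π A e₂) (T.Δ β γ h) := by
  subst e₁; subst e₂
  simp only [lcast_refl]
  have : ∀ t : A β ⊗[k] A γ,
      TensorProduct.map (lcast k π A (rfl : β = β)) (lcast k π A (rfl : γ = γ)) t = t := by
    intro t
    induction t using TensorProduct.induction_on with
    | zero => simp
    | tmul a b => simp
    | add a b ha hb => simp [ha, hb]
  rw [this]

lemma ε_lcast {β : π} (e : β = 1) (e' : β = 1) (x : A β) :
    T.ε (lcast k π A e x) = T.ε (lcast k π A e' x) := rfl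

open TensorProduct LinearMap

/-- `map` applied twice. -/
lemma map_map {M N M' N' M'' N'' : Type u}
    [AddCommMonoid M] [AddCommMonoid N] [AddCommMonoid M'] [AddCommMonoid N']
    [AddCommMonoid M''] [AddCommMonoid N'']
    [Module k M] [Module k N] [Module k M'] [Module k N'] [Module k M''] [Module k N'']
    (f₁ : M →ₗ[k] M') (f₂ : M' →ₗ[k] M'') (g₁ : N →ₗ[k] N') (g₂ : N' →ₗ[k] N'')
    (t : M ⊗[k] N) :
    TensorProduct.map f₂ g₂ (TensorProduct.map f₁ g₁ t) =
      TensorProduct.map (f₂ ∘ₗ f₁) (g₂ ∘ₗ g₁) t := by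
  rw [TensorProduct.map_comp]; rfl

lemma comm_map {M N M' N' : Type u}
    [AddCommMonoid M] [AddCommMonoid N] [AddCommMonoid M'] [AddCommMonoid N']
    [Module k M] [Module k N] [Module k M'] [Module k N']
    (f : M →ₗ[k] M') (g : N →ₗ[k] N') (t : M ⊗[k] N) :
    TensorProduct.comm k M' N' (TensorProduct.map f g t) =
      TensorProduct.map g f (TensorProduct.comm k M N t) := by
  induction t using TensorProduct.induction_on with
  | zero => simp
  | tmul a b => simp
  | add a b ha hb => simp [ha, hb]

lemma lcast_eq_id {α : π} (e : α = α) : lcast k π A e = LinearMap.id := by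
  ext x; simp

/-- comultiplication `A 1 → A α ⊗ A α⁻¹`. -/
noncomputable def Δpq (α : π) : A 1 →ₗ[k] A α ⊗[k] A α⁻¹ :=
  (T.Δ α α⁻¹).toLinearMap ∘ₗ lcast k π A (show (1:π) = α * α⁻¹ by group)

/-- comultiplication `A 1 → A α⁻¹ ⊗ A α`. -/
noncomputable def Δqp (α : π) : A 1 →ₗ[k] A α⁻¹ ⊗[k] A α :=
  (T.Δ α⁻¹ α).toLinearMap ∘ₗ lcast k π A (show (1:π) = α⁻¹ * α by group)

/-- comultiplication `A α → A α ⊗ A 1`. -/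
noncomputable def Δp1 (α : π) : A α →ₗ[k] A α ⊗[k] A 1 :=
  (T.Δ α 1).toLinearMap ∘ₗ lcast k π A (mul_one α).symm

/-- comultiplication `A α → A 1 ⊗ A α`. -/
noncomputable def Δ1p (α : π) : A α →ₗ[k] A 1 ⊗[k] A α :=
  (T.Δ 1 α).toLinearMap ∘ₗ lcast k π A (one_mul α).symm

/-- the antipode `s_{α⁻¹} : A α⁻¹ → A α` (cast). -/
noncomputable def Sb (α : π) : A α⁻¹ →ₗ[k] A α :=
  lcast k π A (inv_inv α) ∘ₗ T.s α⁻¹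

/-- `φ_α : A α⁻¹ → A α⁻¹` (cast). -/
noncomputable def Fφ (α : π) : A α⁻¹ →ₗ[k] A α⁻¹ :=
  lcast k π A (show α * α⁻¹ * α⁻¹ = α⁻¹ by group) ∘ₗ (T.φ α α⁻¹).toLinearMap

/-- `φ_{α⁻¹} : A α⁻¹ → A α⁻¹` (cast). -/
noncomputable def Gφ (α : π) : A α⁻¹ →ₗ[k] A α⁻¹ :=
  lcast k π A (show α⁻¹ * α⁻¹ * α⁻¹⁻¹ = α⁻¹ by group) ∘ₗ (T.φ α⁻¹ α⁻¹).toLinearMap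

/-- `s_{α⁻¹} ∘ φ_α : A α⁻¹ → A α`. -/
noncomputable def Sφ (α : π) : A α⁻¹ →ₗ[k] A α := Sb T α ∘ₗ Fφ T α

/-- the twist `s_{α⁻¹} ∘ φ_α ∘ s_α : A α → A α`. -/
noncomputable def Tm (α : π) : A α →ₗ[k] A α := Sφ T α ∘ₗ T.s α

lemma counit_r (α : π) (x : A α) :
    TensorProduct.rid k (A α)
      (TensorProduct.map LinearMap.id T.ε.toLinearMap (Δp1 T α x)) = x := by
  have h := T.counit_right α (lcast k π A (mul_one α).symm x)
  simp only [lcast_apply, cast_cast, cast_eq] at h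
  simpa [Δp1, lcast_apply] using h

lemma counit_l (α : π) (x : A α) :
    TensorProduct.lid k (A α)
      (TensorProduct.map T.ε.toLinearMap LinearMap.id (Δ1p T α x)) = x := by
  have h := T.counit_left α (lcast k π A (one_mul α).symm x)
  simp only [lcast_apply, cast_cast, cast_eq] at h
  simpa [Δ1p, lcast_apply] using h

lemma antipode_a (α : π) (u : A 1) :
    LinearMap.mul' k (A α)
      (TensorProduct.map LinearMap.id (Sb T α) (Δpq T α u)) = T.ε u • 1 := by
  have h := T.antipode_right α (lcast k π A (show (1:π) = α * α⁻¹ by group) u)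
  simp only [lcast_apply, cast_cast, cast_eq] at h
  simpa [Δpq, Sb, Algebra.algebraMap_eq_smul_one, lcast_apply] using h

lemma antipode_b (α : π) (u : A 1) :
    LinearMap.mul' k (A α)
      (TensorProduct.map (Sb T α) LinearMap.id (Δqp T α u)) = T.ε u • 1 := by
  have h := T.antipode_left α (lcast k π A (show (1:π) = α⁻¹ * α by group) u)
  simp only [lcast_apply, cast_cast, cast_eq] at h
  simpa [Δqp, Sb, Algebra.algebraMap_eq_smul_one, lcast_apply] using h

lemma antipode_c (α : π) (u : A 1) :
    LinearMap.mul' k (A α⁻¹)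
      (TensorProduct.map LinearMap.id (T.s α) (Δqp T α u)) = T.ε u • 1 := by
  have h := T.antipode_right α⁻¹ (lcast k π A (show (1:π) = α⁻¹ * α⁻¹⁻¹ by group) u)
  rw [show (lcast k π A (show (1:π) = α⁻¹ * α⁻¹⁻¹ by group) u)
      = lcast k π A (show α⁻¹ * α = α⁻¹ * α⁻¹⁻¹ by rw [inv_inv])
          (lcast k π A (show (1:π) = α⁻¹ * α by group) u) from (lcast_lcast _ _ _).symm,
    Δ_lcast T rfl (inv_inv α).symm] at h
  rw [map_map] at h
  have hmap : ((lcast k π A (inv_inv α⁻¹) ∘ₗ T.s α⁻¹⁻¹) ∘ₗ lcast k π A (inv_inv α).symm)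
      = T.s α := by
    ext x
    simp only [LinearMap.comp_apply, s_lcast, lcast_lcast, lcast_refl]
  rw [hmap] at h
  have hid : (LinearMap.id ∘ₗ lcast k π A (rfl : α⁻¹ = α⁻¹)) = (LinearMap.id : A α⁻¹ →ₗ[k] A α⁻¹) := by
    ext x; simp
  rw [hid] at h
  simp only [lcast_apply, cast_cast, cast_eq] at h
  simpa [Δqp, Algebra.algebraMap_eq_smul_one, lcast_apply] using h

lemma antipode_d (α : π) (u : A 1) :
    LinearMap.mul' k (A α⁻¹)
      (TensorProduct.map (T.s α) LinearMap.id (Δpq T α u)) = T.ε u • 1 := by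
  have h := T.antipode_left α⁻¹ (lcast k π A (show (1:π) = α⁻¹⁻¹ * α⁻¹ by group) u)
  rw [show (lcast k π A (show (1:π) = α⁻¹⁻¹ * α⁻¹ by group) u)
      = lcast k π A (show α * α⁻¹ = α⁻¹⁻¹ * α⁻¹ by rw [inv_inv])
          (lcast k π A (show (1:π) = α * α⁻¹ by group) u) from (lcast_lcast _ _ _).symm,
    Δ_lcast T (inv_inv α).symm rfl] at h
  rw [map_map] at h
  have hmap : ((lcast k π A (inv_inv α⁻¹) ∘ₗ T.s α⁻¹⁻¹) ∘ₗ lcast k π A (inv_inv α).symm)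
      = T.s α := by
    ext x
    simp only [LinearMap.comp_apply, s_lcast, lcast_lcast, lcast_refl]
  rw [hmap] at h
  have hid : (LinearMap.id ∘ₗ lcast k π A (rfl : α⁻¹ = α⁻¹)) = (LinearMap.id : A α⁻¹ →ₗ[k] A α⁻¹) := by
    ext x; simp
  rw [hid] at h
  simp only [lcast_apply, cast_cast, cast_eq] at h
  simpa [Δpq, Algebra.algebraMap_eq_smul_one, lcast_apply] using h


lemma coassocE (α : π) (x : A α) :
    (TensorProduct.assoc k (A α) (A α⁻¹) (A α))
        (TensorProduct.map (Δpq T α) LinearMap.id (Δ1p T α x)) =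
      TensorProduct.map LinearMap.id (Δqp T α) (Δp1 T α x) := by
  have h := T.coassoc α α⁻¹ α (lcast k π A (show α = α * α⁻¹ * α by group) x)
  rw [show (lcast k π A (show α = α * α⁻¹ * α by group) x)
      = lcast k π A (show (1 * α : π) = α * α⁻¹ * α by group)
          (lcast k π A (one_mul α).symm x) from (lcast_lcast _ _ _).symm,
    Δ_lcast T (show (1:π) = α * α⁻¹ by group) rfl] at h
  rw [show (cast (congrArg A (mul_assoc α α⁻¹ α))
        (lcast k π A (show (1 * α : π) = α * α⁻¹ * α by group)
          (lcast k π A (one_mul α).symm x)))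
      = lcast k π A (show (α * 1 : π) = α * (α⁻¹ * α) by group)
          (lcast k π A (mul_one α).symm x) from by
        simp only [lcast_apply, cast_cast],
    Δ_lcast T rfl (show (1:π) = α⁻¹ * α by group)] at h
  rw [map_map, map_map] at h
  exact h

lemma Δpq_one (α : π) : Δpq T α 1 = (1 : A α) ⊗ₜ[k] (1 : A α⁻¹) := by
  simp [Δpq, lcast_one, Algebra.TensorProduct.one_def]

lemma Δqp_one (α : π) : Δqp T α 1 = (1 : A α⁻¹) ⊗ₜ[k] (1 : A α) := by
  simp [Δqp, lcast_one, Algebra.TensorProduct.one_def]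

lemma Δpq_mul (α : π) (u v : A 1) :
    Δpq T α (u * v) = Δpq T α u * Δpq T α v := by
  simp [Δpq, lcast_mul]

lemma Δqp_mul (α : π) (u v : A 1) :
    Δqp T α (u * v) = Δqp T α u * Δqp T α v := by
  simp [Δqp, lcast_mul]

lemma s_one (α : π) : T.s α (1 : A α) = 1 := by
  have h := antipode_d T α (1 : A 1)
  rw [Δpq_one] at h
  simpa using h


lemma span_left {M N Z : Type u} [AddCommMonoid M] [AddCommMonoid N] [AddCommMonoid Z]
    [Module k M] [Module k N] [Module k Z]
    (e : M →ₗ[k] k) (z : Z) (t : M ⊗[k] N) :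
    TensorProduct.map (LinearMap.toSpanSingleton k Z z ∘ₗ e) LinearMap.id t
      = z ⊗ₜ (TensorProduct.lid k N (TensorProduct.map e LinearMap.id t)) := by
  induction t using TensorProduct.induction_on with
  | zero => simp
  | tmul m n => simp [LinearMap.toSpanSingleton_apply, smul_tmul]
  | add a b ha hb => simp [ha, hb, tmul_add]

lemma span_right {M N Z : Type u} [AddCommMonoid M] [AddCommMonoid N] [AddCommMonoid Z]
    [Module k M] [Module k N] [Module k Z]
    (e : N →ₗ[k] k) (z : Z) (t : M ⊗[k] N) :
    TensorProduct.map LinearMap.id (LinearMap.toSpanSingleton k Z z ∘ₗ e) t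
      = (TensorProduct.rid k M (TensorProduct.map LinearMap.id e t)) ⊗ₜ z := by
  induction t using TensorProduct.induction_on with
  | zero => simp
  | tmul m n => simp [LinearMap.toSpanSingleton_apply, smul_tmul, tmul_smul]
  | add a b ha hb => simp [ha, hb, add_tmul]

lemma col1 (α : π) (x : A α) :
    TensorProduct.map
        ((LinearMap.mul' k (A α⁻¹) ∘ₗ TensorProduct.map (T.s α) LinearMap.id) ∘ₗ Δpq T α)
        LinearMap.id (Δ1p T α x) = (1 : A α⁻¹) ⊗ₜ[k] x := by
  have key : ((LinearMap.mul' k (A α⁻¹) ∘ₗ TensorProduct.map (T.s α) LinearMap.id) ∘ₗ Δpq T α)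
      = LinearMap.toSpanSingleton k (A α⁻¹) 1 ∘ₗ T.ε.toLinearMap := by
    ext u
    simp only [LinearMap.comp_apply, AlgHom.toLinearMap_apply,
      LinearMap.toSpanSingleton_apply]
    exact antipode_d T α u
  rw [key, span_left, counit_l]

lemma claim1 (α : π) (t : A α⁻¹ ⊗[k] A α) (w : (A α ⊗[k] A α⁻¹) ⊗[k] A α) :
    LinearMap.mul' k (A α⁻¹)
      (TensorProduct.map (T.s α)
        (LinearMap.mul' k (A α⁻¹) ∘ₗ TensorProduct.map LinearMap.id (T.s α)
          ∘ₗ LinearMap.mulRight k t)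
        (TensorProduct.assoc k (A α) (A α⁻¹) (A α) w)) =
    LinearMap.mul' k (A α⁻¹)
      (TensorProduct.map LinearMap.id (T.s α)
        ((TensorProduct.map (LinearMap.mul' k (A α⁻¹) ∘ₗ TensorProduct.map (T.s α) LinearMap.id)
            LinearMap.id w) * t)) := by
  have MS : ∀ (c : A α⁻¹) (r : A α⁻¹ ⊗[k] A α),
      LinearMap.mul' k (A α⁻¹) (TensorProduct.map LinearMap.id (T.s α) ((c ⊗ₜ[k] (1 : A α)) * r))
        = c * LinearMap.mul' k (A α⁻¹) (TensorProduct.map LinearMap.id (T.s α) r) := by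
    intro c r
    induction r using TensorProduct.induction_on with
    | zero => simp
    | tmul q p => simp [Algebra.TensorProduct.tmul_mul_tmul, mul_assoc]
    | add a b ha hb => simp [mul_add, ha, hb]
  induction w using TensorProduct.induction_on with
  | zero =>
    rw [(TensorProduct.assoc k (A α) (A α⁻¹) (A α)).map_zero]; simp
  | tmul u b =>
    induction u using TensorProduct.induction_on with
    | zero =>
      rw [TensorProduct.zero_tmul, (TensorProduct.assoc k (A α) (A α⁻¹) (A α)).map_zero]
      simp [zero_mul]
    | tmul x1 a =>
      simp only [TensorProduct.assoc_tmul, TensorProduct.map_tmul, LinearMap.comp_apply,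
        LinearMap.mul'_apply, LinearMap.mulRight_apply, LinearMap.id_apply]
      rw [show ((T.s α x1 * a) ⊗ₜ[k] b) = ((T.s α x1) ⊗ₜ[k] (1 : A α)) * (a ⊗ₜ[k] b) by
        simp [Algebra.TensorProduct.tmul_mul_tmul]]
      rw [mul_assoc, MS]
    | add a b ha hb => simp only [add_tmul, map_add, add_mul, ha, hb]
  | add a b ha hb => simp only [map_add, add_mul, ha, hb]

lemma claim2 (α : π) (x : A α) (w : (A α ⊗[k] A α⁻¹) ⊗[k] A α) :
    LinearMap.mul' k (A α⁻¹)
      (TensorProduct.map (T.s α)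
        (LinearMap.mul' k (A α⁻¹) ∘ₗ TensorProduct.map LinearMap.id (T.s α)
          ∘ₗ LinearMap.mulLeft k (((1 : A α⁻¹) ⊗ₜ[k] x : A α⁻¹ ⊗[k] A α)))
        (TensorProduct.assoc k (A α) (A α⁻¹) (A α) w)) =
    LinearMap.mul' k (A α⁻¹)
      (TensorProduct.map LinearMap.id (T.s α)
        ((((1 : A α⁻¹) ⊗ₜ[k] x : A α⁻¹ ⊗[k] A α)) *
          (TensorProduct.map (LinearMap.mul' k (A α⁻¹) ∘ₗ TensorProduct.map (T.s α) LinearMap.id)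
            LinearMap.id w))) := by
  induction w using TensorProduct.induction_on with
  | zero =>
    rw [(TensorProduct.assoc k (A α) (A α⁻¹) (A α)).map_zero]; simp
  | tmul u b =>
    induction u using TensorProduct.induction_on with
    | zero =>
      rw [TensorProduct.zero_tmul, (TensorProduct.assoc k (A α) (A α⁻¹) (A α)).map_zero]
      simp [zero_mul]
    | tmul y1 a =>
      simp only [TensorProduct.assoc_tmul, TensorProduct.map_tmul, LinearMap.comp_apply,
        LinearMap.mul'_apply, LinearMap.mulLeft_apply, LinearMap.id_apply,
        Algebra.TensorProduct.tmul_mul_tmul, one_mul]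
      simp [mul_assoc]
    | add a b ha hb => simp only [add_tmul, map_add, mul_add, add_mul, ha, hb]
  | add a b ha hb => simp only [map_add, mul_add, add_mul, ha, hb]

lemma core1 (α : π) (t : A α⁻¹ ⊗[k] A α) (x : A α) :
    LinearMap.mul' k (A α⁻¹)
      (TensorProduct.map (T.s α)
        (LinearMap.mul' k (A α⁻¹) ∘ₗ TensorProduct.map LinearMap.id (T.s α)
          ∘ₗ LinearMap.mulRight k t)
        (TensorProduct.map LinearMap.id (Δqp T α) (Δp1 T α x))) =
    LinearMap.mul' k (A α⁻¹)
      (TensorProduct.map LinearMap.id (T.s α) ((((1 : A α⁻¹) ⊗ₜ[k] x)) * t)) := by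
  rw [← coassocE, claim1, map_map]
  rw [show ((LinearMap.mul' k (A α⁻¹) ∘ₗ TensorProduct.map (T.s α) LinearMap.id) ∘ₗ Δpq T α)
      = ((LinearMap.mul' k (A α⁻¹) ∘ₗ TensorProduct.map (T.s α) LinearMap.id) ∘ₗ Δpq T α) from rfl]
  rw [show (LinearMap.id ∘ₗ (LinearMap.id : A α →ₗ[k] A α)) = (LinearMap.id : A α →ₗ[k] A α) from rfl]
  rw [col1]

lemma core2 (α : π) (x y : A α) :
    LinearMap.mul' k (A α⁻¹)
      (TensorProduct.map (T.s α)
        (LinearMap.mul' k (A α⁻¹) ∘ₗ TensorProduct.map LinearMap.id (T.s α)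
          ∘ₗ LinearMap.mulLeft k (((1 : A α⁻¹) ⊗ₜ[k] x : A α⁻¹ ⊗[k] A α)))
        (TensorProduct.map LinearMap.id (Δqp T α) (Δp1 T α y))) = T.s α (x * y) := by
  rw [← coassocE, claim2, map_map]
  rw [show (LinearMap.id ∘ₗ (LinearMap.id : A α →ₗ[k] A α)) = (LinearMap.id : A α →ₗ[k] A α) from rfl]
  rw [col1]
  simp [Algebra.TensorProduct.tmul_mul_tmul]

theorem s_antihom (α : π) (x y : A α) : T.s α (x * y) = T.s α y * T.s α x := by
  obtain ⟨I, hI⟩ := TensorProduct.exists_finset (Δp1 T α x)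
  obtain ⟨J, hJ⟩ := TensorProduct.exists_finset (Δp1 T α y)
  have hx : x = ∑ i ∈ I, T.ε i.2 • i.1 := by
    conv_lhs => rw [← counit_r T α x, hI]
    rw [map_sum, map_sum]
    exact Finset.sum_congr rfl fun i _ => by simp
  have hy : y = ∑ j ∈ J, T.ε j.2 • j.1 := by
    conv_lhs => rw [← counit_r T α y, hJ]
    rw [map_sum, map_sum]
    exact Finset.sum_congr rfl fun j _ => by simp
  have step1 : T.s α y * T.s α x
      = ∑ j ∈ J, ∑ i ∈ I,
          (T.s α j.1 * T.s α i.1) *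
            (LinearMap.mul' k (A α⁻¹)
              (TensorProduct.map LinearMap.id (T.s α) (Δqp T α i.2 * Δqp T α j.2))) := by
    conv_lhs => rw [hx, hy]
    rw [map_sum, map_sum, Finset.sum_mul_sum]
    refine Finset.sum_congr rfl fun j _ => Finset.sum_congr rfl fun i _ => ?_
    rw [← Δqp_mul, antipode_c, map_smul, map_smul]
    rw [smul_mul_smul_comm]
    rw [mul_smul_comm, mul_one, map_mul]
    rw [mul_comm (T.ε i.2) (T.ε j.2)]
  have step2 : ∀ j : A α × A 1,
      (∑ i ∈ I, (T.s α j.1 * T.s α i.1) *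
        (LinearMap.mul' k (A α⁻¹)
          (TensorProduct.map LinearMap.id (T.s α) (Δqp T α i.2 * Δqp T α j.2))))
      = T.s α j.1 *
          LinearMap.mul' k (A α⁻¹)
            (TensorProduct.map LinearMap.id (T.s α)
              ((((1 : A α⁻¹) ⊗ₜ[k] x)) * Δqp T α j.2)) := by
    intro j
    rw [← core1 T α (Δqp T α j.2) x]
    rw [hI, map_sum, map_sum, map_sum, Finset.mul_sum]
    refine Finset.sum_congr rfl fun i _ => ?_
    simp only [TensorProduct.map_tmul, LinearMap.comp_apply, LinearMap.mul'_apply,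
      LinearMap.mulRight_apply, LinearMap.id_apply, mul_assoc]
  have step3 : T.s α y * T.s α x
      = ∑ j ∈ J, T.s α j.1 *
          LinearMap.mul' k (A α⁻¹)
            (TensorProduct.map LinearMap.id (T.s α)
              ((((1 : A α⁻¹) ⊗ₜ[k] x)) * Δqp T α j.2)) := by
    rw [step1]; exact Finset.sum_congr rfl fun j _ => step2 j
  rw [step3, ← core2 T α x y]
  rw [hJ, map_sum, map_sum, map_sum]
  refine Finset.sum_congr rfl fun j _ => ?_
  simp only [TensorProduct.map_tmul, LinearMap.comp_apply, LinearMap.mul'_apply,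
    LinearMap.mulLeft_apply, LinearMap.id_apply]


lemma eq_lcast_symm {α β : π} (e : α = β) {x : A α} {y : A β}
    (h : lcast k π A e x = y) : x = lcast k π A e.symm y := by
  subst e; simpa using h

lemma Fφ_mul (α : π) (x y : A α⁻¹) :
    Fφ T α (x * y) = Fφ T α x * Fφ T α y := by
  simp [Fφ, lcast_mul]

lemma Fφ_one (α : π) : Fφ T α (1 : A α⁻¹) = 1 := by
  simp [Fφ, lcast_one]

lemma Sb_antihom (α : π) (x y : A α⁻¹) :
    Sb T α (x * y) = Sb T α y * Sb T α x := by
  simp [Sb, s_antihom, lcast_mul]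

lemma Sb_one (α : π) : Sb T α (1 : A α⁻¹) = 1 := by
  simp [Sb, s_one, lcast_one]

lemma Sφ_antihom (α : π) (x y : A α⁻¹) :
    Sφ T α (x * y) = Sφ T α y * Sφ T α x := by
  simp [Sφ, Fφ_mul, Sb_antihom]

lemma Sφ_one (α : π) : Sφ T α (1 : A α⁻¹) = 1 := by
  simp [Sφ, Fφ_one, Sb_one]

/-- `φ_1` with the canonical cast. -/
noncomputable def ψ1 (a : π) : A a →ₗ[k] A a :=
  lcast k π A (show (1:π) * a * 1⁻¹ = a by group) ∘ₗ (T.φ 1 a).toLinearMap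

lemma ψ1_inj (a : π) : Function.Injective (ψ1 T a) := by
  intro x y h
  simp only [ψ1, LinearMap.comp_apply, AlgHom.toLinearMap_apply] at h
  exact (T.φ_bij 1 a).1 (lcast_inj _ h)

lemma ψ1_idem (a : π) (x : A a) : ψ1 T a (ψ1 T a x) = ψ1 T a x := by
  have h : lcast k π A (show (1:π) * ((1:π) * a * 1⁻¹) * 1⁻¹ = (1:π) * 1 * a * ((1:π) * 1)⁻¹ by group)
      (T.φ 1 ((1:π) * a * 1⁻¹) (T.φ 1 a x)) = T.φ ((1:π) * 1) a x := T.φ_mul 1 1 a x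
  have h' := eq_lcast_symm _ h
  simp only [ψ1, LinearMap.comp_apply, AlgHom.toLinearMap_apply]
  rw [φ_lcast T 1 (show (1:π) * a * 1⁻¹ = a by group) (T.φ 1 a x), lcast_lcast, h',
    φ_outer T (show (1:π) = 1 * 1 by group) a x, lcast_lcast, lcast_lcast]

lemma ψ1_id (a : π) (x : A a) : ψ1 T a x = x :=
  ψ1_inj T a (ψ1_idem T a x)

lemma Fφ_Gφ (α : π) (x : A α⁻¹) : Fφ T α (Gφ T α x) = x := by
  have h : lcast k π A (show α * (α⁻¹ * α⁻¹ * α⁻¹⁻¹) * α⁻¹ = α * α⁻¹ * α⁻¹ * (α * α⁻¹)⁻¹ by group)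
      (T.φ α (α⁻¹ * α⁻¹ * α⁻¹⁻¹) (T.φ α⁻¹ α⁻¹ x)) = T.φ (α * α⁻¹) α⁻¹ x := T.φ_mul α α⁻¹ α⁻¹ x
  have h' := eq_lcast_symm _ h
  simp only [Fφ, Gφ, LinearMap.comp_apply, AlgHom.toLinearMap_apply]
  rw [φ_lcast T α (show α⁻¹ * α⁻¹ * α⁻¹⁻¹ = α⁻¹ by group) (T.φ α⁻¹ α⁻¹ x), lcast_lcast, h',
    φ_outer T (show (1:π) = α * α⁻¹ by group) α⁻¹ x, lcast_lcast, lcast_lcast]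
  exact ψ1_id T α⁻¹ x

lemma Sφ_Gφ (α : π) (x : A α⁻¹) : Sφ T α (Gφ T α x) = Sb T α x := by
  simp [Sφ, Fφ_Gφ]


variable (Qt : QTStruct k π A T)

/-- the map `x ⊗ y ↦ (s_{α⁻¹} φ_α)(y)·x`. -/
noncomputable def fm (α : π) : A α ⊗[k] A α⁻¹ →ₗ[k] A α :=
  LinearMap.mul' k (A α) ∘ₗ TensorProduct.map (Sφ T α) LinearMap.id
    ∘ₗ (TensorProduct.comm k (A α) (A α⁻¹)).toLinearMap

/-- the map `c ⊗ (x ⊗ y) ↦ (s_{α⁻¹} φ_α)(y)·c·x`. -/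
noncomputable def bigSand (α : π) : A α ⊗[k] (A α ⊗[k] A α⁻¹) →ₗ[k] A α :=
  LinearMap.mul' k (A α) ∘ₗ
    TensorProduct.map
      (LinearMap.mul' k (A α) ∘ₗ TensorProduct.map (Sφ T α) LinearMap.id
        ∘ₗ (TensorProduct.comm k (A α) (A α⁻¹)).toLinearMap)
      LinearMap.id
    ∘ₗ (TensorProduct.assoc k (A α) (A α⁻¹) (A α)).symm.toLinearMap
    ∘ₗ TensorProduct.map LinearMap.id (TensorProduct.comm k (A α) (A α⁻¹)).toLinearMap

/-- the map `x ⊗ y ↦ (s_{α⁻¹} φ_α)(y)·u_α·x`. -/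
noncomputable def Km (α : π) : A α ⊗[k] A α⁻¹ →ₗ[k] A α :=
  LinearMap.mul' k (A α) ∘ₗ
    TensorProduct.map (LinearMap.mulRight k (drinfeld k π A T Qt α) ∘ₗ Sφ T α) LinearMap.id
    ∘ₗ (TensorProduct.comm k (A α) (A α⁻¹)).toLinearMap

@[simp] lemma fm_tmul (α : π) (x : A α) (y : A α⁻¹) :
    fm T α (x ⊗ₜ y) = Sφ T α y * x := by
  simp [fm]

@[simp] lemma Km_tmul (α : π) (x : A α) (y : A α⁻¹) :
    Km T Qt α (x ⊗ₜ y) = Sφ T α y * drinfeld k π A T Qt α * x := by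
  simp [Km, mul_assoc]

@[simp] lemma bigSand_tmul (α : π) (c : A α) (x : A α) (y : A α⁻¹) :
    bigSand T α (c ⊗ₜ (x ⊗ₜ y)) = Sφ T α y * c * x := by
  simp [bigSand]

lemma fm_R (α : π) : fm T α (Qt.R α α⁻¹) = drinfeld k π A T Qt α := by
  simp only [fm, LinearMap.comp_apply, LinearEquiv.coe_toLinearMap]
  rw [← comm_map]
  rfl

lemma fm_mul_tmul (α : π) (r : A α ⊗[k] A α⁻¹) (p : A α) (q : A α⁻¹) :
    fm T α (r * (p ⊗ₜ q)) = Sφ T α q * fm T α r * p := by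
  induction r using TensorProduct.induction_on with
  | zero => simp [zero_mul]
  | tmul a b =>
    simp [Algebra.TensorProduct.tmul_mul_tmul, Sφ_antihom, mul_assoc]
  | add a b ha hb => simp [add_mul, ha, hb, mul_add]

lemma fm_tmul_mul (α : π) (r : A α ⊗[k] A α⁻¹) (p : A α) (q : A α⁻¹) :
    fm T α ((p ⊗ₜ q) * r) = bigSand T α ((Sφ T α q * p) ⊗ₜ r) := by
  induction r using TensorProduct.induction_on with
  | zero => simp [mul_zero, tmul_zero]
  | tmul a b =>
    simp [Algebra.TensorProduct.tmul_mul_tmul, Sφ_antihom, mul_assoc]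
  | add a b ha hb => simp [mul_add, ha, hb, tmul_add]

lemma fm_R_mul (α : π) (t : A α ⊗[k] A α⁻¹) :
    fm T α (Qt.R α α⁻¹ * t) = Km T Qt α t := by
  induction t using TensorProduct.induction_on with
  | zero => simp [mul_zero]
  | tmul p q => rw [fm_mul_tmul, fm_R, Km_tmul]
  | add a b ha hb => simp only [mul_add, map_add, ha, hb]

lemma fm_comm_mul (α : π) (t' : A α⁻¹ ⊗[k] A α) :
    fm T α ((TensorProduct.comm k (A α⁻¹) (A α)) t' * Qt.R α α⁻¹) =
      bigSand T α
        ((LinearMap.mul' k (A α) (TensorProduct.map (Sφ T α) LinearMap.id t'))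
          ⊗ₜ[k] Qt.R α α⁻¹) := by
  induction t' using TensorProduct.induction_on with
  | zero => simp [zero_mul, zero_tmul]
  | tmul q p => simp [fm_tmul_mul]
  | add a b ha hb =>
    simp only [map_add, add_mul, ha, hb, add_tmul]

lemma bigSand_one_tmul (α : π) (r : A α ⊗[k] A α⁻¹) :
    bigSand T α ((1 : A α) ⊗ₜ r) = fm T α r := by
  induction r using TensorProduct.induction_on with
  | zero => simp [tmul_zero]
  | tmul a b => simp
  | add a b ha hb => simp only [tmul_add, map_add, ha, hb]

lemma rel1_clean (α : π) (u : A 1) :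
    Qt.R α α⁻¹ * Δpq T α u =
      (TensorProduct.comm k (A α⁻¹) (A α))
        (TensorProduct.map (Gφ T α) LinearMap.id (Δqp T α u)) * Qt.R α α⁻¹ := by
  have h := Qt.R_rel1 α α⁻¹ (lcast k π A (show (1:π) = α * α⁻¹ by group) u)
  rw [show (cast (congrArg A (show α * α⁻¹ = α * α⁻¹ * α⁻¹ * α by group))
        (lcast k π A (show (1:π) = α * α⁻¹ by group) u))
      = lcast k π A (show (α⁻¹ * α : π) = α * α⁻¹ * α⁻¹ * α by group)
          (lcast k π A (show (1:π) = α⁻¹ * α by group) u) from by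
        simp only [lcast_apply, cast_cast],
    Δ_lcast T (show α⁻¹ = α * α⁻¹ * α⁻¹ by group) rfl, map_map] at h
  have hc : (((lcast k π A (show α⁻¹ * (α * α⁻¹ * α⁻¹) * α⁻¹⁻¹ = α⁻¹ by group)).comp
        (T.φ α⁻¹ (α * α⁻¹ * α⁻¹)).toLinearMap) ∘ₗ
          lcast k π A (show α⁻¹ = α * α⁻¹ * α⁻¹ by group))
      = Gφ T α := by
    ext x
    simp only [LinearMap.comp_apply, AlgHom.toLinearMap_apply, Gφ]
    rw [φ_lcast T α⁻¹ (show α⁻¹ = α * α⁻¹ * α⁻¹ by group) x, lcast_lcast]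
  have hid : (LinearMap.id ∘ₗ lcast k π A (rfl : α = α)) = (LinearMap.id : A α →ₗ[k] A α) := by
    ext x; simp
  rw [hc, hid] at h
  exact h

lemma Sφ_comp_Gφ (α : π) : Sφ T α ∘ₗ Gφ T α = Sb T α := by
  ext x; simp [Sφ_Gφ]

lemma onegee (α : π) (u : A 1) :
    Km T Qt α (Δpq T α u) = T.ε u • drinfeld k π A T Qt α := by
  calc Km T Qt α (Δpq T α u)
      = fm T α (Qt.R α α⁻¹ * Δpq T α u) := (fm_R_mul T Qt α _).symm
    _ = fm T α ((TensorProduct.comm k (A α⁻¹) (A α))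
          (TensorProduct.map (Gφ T α) LinearMap.id (Δqp T α u)) * Qt.R α α⁻¹) := by
        rw [rel1_clean]
    _ = bigSand T α
          ((LinearMap.mul' k (A α)
            (TensorProduct.map (Sφ T α) LinearMap.id
              (TensorProduct.map (Gφ T α) LinearMap.id (Δqp T α u))))
            ⊗ₜ[k] Qt.R α α⁻¹) := fm_comm_mul T Qt α _
    _ = bigSand T α
          ((LinearMap.mul' k (A α)
            (TensorProduct.map (Sb T α) LinearMap.id (Δqp T α u))) ⊗ₜ[k] Qt.R α α⁻¹) := by
        rw [map_map, Sφ_comp_Gφ]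
        rw [show (LinearMap.id ∘ₗ (LinearMap.id : A α →ₗ[k] A α)) = LinearMap.id from rfl]
    _ = bigSand T α ((T.ε u • (1 : A α)) ⊗ₜ[k] Qt.R α α⁻¹) := by rw [antipode_b]
    _ = T.ε u • bigSand T α ((1 : A α) ⊗ₜ[k] Qt.R α α⁻¹) := by
        rw [← TensorProduct.smul_tmul', map_smul]
    _ = T.ε u • drinfeld k π A T Qt α := by rw [bigSand_one_tmul, fm_R]


/-- the map `q ⊗ p ↦ Tm(p)·Sφ(q)`. -/
noncomputable def inner2c (α : π) : A α⁻¹ ⊗[k] A α →ₗ[k] A α :=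
  LinearMap.mul' k (A α) ∘ₗ TensorProduct.map (Tm T α) (Sφ T α)
    ∘ₗ (TensorProduct.comm k (A α⁻¹) (A α)).toLinearMap

@[simp] lemma inner2c_tmul (α : π) (q : A α⁻¹) (p : A α) :
    inner2c T α (q ⊗ₜ p) = Tm T α p * Sφ T α q := by
  simp [inner2c]

lemma inner2c_eq (α : π) (t : A α⁻¹ ⊗[k] A α) :
    inner2c T α t = Sb T α (Fφ T α
      (LinearMap.mul' k (A α⁻¹) (TensorProduct.map LinearMap.id (T.s α) t))) := by
  induction t using TensorProduct.induction_on with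
  | zero => simp
  | tmul q p => simp [Tm, Sφ, Fφ_mul, Sb_antihom]
  | add a b ha hb => simp only [map_add, ha, hb]

lemma inner2c_Δqp (α : π) (u : A 1) :
    inner2c T α (Δqp T α u) = T.ε u • 1 := by
  rw [inner2c_eq, antipode_c, map_smul, map_smul, Fφ_one, Sb_one]

lemma col2 (α : π) (x : A α) :
    TensorProduct.map LinearMap.id (inner2c T α)
        (TensorProduct.map LinearMap.id (Δqp T α) (Δp1 T α x)) = x ⊗ₜ[k] (1 : A α) := by
  rw [map_map]
  rw [show (LinearMap.id ∘ₗ (LinearMap.id : A α →ₗ[k] A α)) = LinearMap.id from rfl]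
  have key : inner2c T α ∘ₗ Δqp T α
      = LinearMap.toSpanSingleton k (A α) 1 ∘ₗ T.ε.toLinearMap := by
    ext u
    simp only [LinearMap.comp_apply, AlgHom.toLinearMap_apply,
      LinearMap.toSpanSingleton_apply]
    exact inner2c_Δqp T α u
  rw [key, span_right, counit_r]

lemma ua_comm (α : π) (x : A α) :
    drinfeld k π A T Qt α * x = Tm T α x * drinfeld k π A T Qt α := by
  set ua := drinfeld k π A T Qt α with hua
  set Xm : A α ⊗[k] (A α⁻¹ ⊗[k] A α) →ₗ[k] A α :=
    LinearMap.mul' k (A α) ∘ₗ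
      TensorProduct.map (LinearMap.mulRight k ua ∘ₗ inner2c T α) LinearMap.id
      ∘ₗ (TensorProduct.comm k (A α) (A α⁻¹ ⊗[k] A α)).toLinearMap with hXm
  have e1 : Xm (TensorProduct.map LinearMap.id (Δqp T α) (Δp1 T α x)) = ua * x := by
    have claimA : ∀ v : A α ⊗[k] (A α⁻¹ ⊗[k] A α),
        Xm v = LinearMap.mul' k (A α)
          (TensorProduct.map (LinearMap.mulRight k ua) LinearMap.id
            ((TensorProduct.comm k (A α) (A α))
              (TensorProduct.map LinearMap.id (inner2c T α) v))) := by
      intro v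
      induction v using TensorProduct.induction_on with
      | zero =>
        simp only [map_zero, (TensorProduct.comm k (A α) (A α)).map_zero]
      | tmul p w => simp [hXm]
      | add a b ha hb => simp only [map_add, ha, hb]
    rw [claimA, col2]
    simp
  have e2 : Xm (TensorProduct.map LinearMap.id (Δqp T α) (Δp1 T α x)) = Tm T α x * ua := by
    rw [← coassocE]
    have claimB : ∀ w : (A α ⊗[k] A α⁻¹) ⊗[k] A α,
        Xm (TensorProduct.assoc k (A α) (A α⁻¹) (A α) w) =
          LinearMap.mul' k (A α)
            (TensorProduct.map (Tm T α) (Km T Qt α)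
              ((TensorProduct.comm k (A α ⊗[k] A α⁻¹) (A α)) w)) := by
      intro w
      induction w using TensorProduct.induction_on with
      | zero =>
        rw [(TensorProduct.assoc k (A α) (A α⁻¹) (A α)).map_zero]
        simp only [map_zero, (TensorProduct.comm k (A α ⊗[k] A α⁻¹) (A α)).map_zero]
      | tmul v b =>
        induction v using TensorProduct.induction_on with
        | zero =>
          rw [TensorProduct.zero_tmul,
            (TensorProduct.assoc k (A α) (A α⁻¹) (A α)).map_zero]
          simp only [map_zero, TensorProduct.zero_tmul,
            (TensorProduct.comm k (A α ⊗[k] A α⁻¹) (A α)).map_zero]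
        | tmul p q =>
          simp [hXm, mul_assoc, hua]
        | add a b ha hb =>
          simp only [add_tmul, map_add, ha, hb]
      | add a b ha hb => simp only [map_add, ha, hb]
    rw [claimB, comm_map, map_map]
    rw [show (Tm T α ∘ₗ LinearMap.id) = Tm T α from rfl]
    have key : Km T Qt α ∘ₗ Δpq T α
        = LinearMap.toSpanSingleton k (A α) ua ∘ₗ T.ε.toLinearMap := by
      ext u
      simp only [LinearMap.comp_apply, AlgHom.toLinearMap_apply,
        LinearMap.toSpanSingleton_apply]
      exact onegee T Qt α u
    rw [key]
    have claimC : ∀ t : A 1 ⊗[k] A α,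
        LinearMap.mul' k (A α)
          (TensorProduct.map (Tm T α)
            (LinearMap.toSpanSingleton k (A α) ua ∘ₗ T.ε.toLinearMap)
            ((TensorProduct.comm k (A 1) (A α)) t)) =
        Tm T α ((TensorProduct.lid k (A α))
          (TensorProduct.map T.ε.toLinearMap LinearMap.id t)) * ua := by
      intro t
      induction t using TensorProduct.induction_on with
      | zero =>
        simp only [map_zero, (TensorProduct.comm k (A 1) (A α)).map_zero, zero_mul]
      | tmul u p =>
        simp [LinearMap.toSpanSingleton_apply, mul_smul_comm, smul_mul_assoc]
      | add a b ha hb => simp only [map_add, ha, hb, add_mul]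
    rw [claimC, counit_l]
  rw [← e1, e2]

end TProof






end Aux

/-- each Drinfeld element `u_α` of a quasitriangular crossed Hopf
`π`-coalgebra is invertible, with inverse
`u_α⁻¹ = s_α⁻¹(ζ̃_{(α⁻¹).i}) · ξ̃_{(α).i}` where
`R⁻¹_{α,α⁻¹} = ξ̃_{(α).i} ⊗ ζ̃_{(α⁻¹).i}` and `s_α⁻¹` is the inverse of the
antipode. -/
theorem drinfeld_isUnit
    (A : π → Type u) [∀ α, Ring (A α)] [∀ α, Algebra k (A α)]
    (T : TCoalgStruct k π A) (Q : QTStruct k π A T)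
    (sInv : ∀ α : π, A α⁻¹ →ₗ[k] A α)
    (hsInv₁ : ∀ (α : π) (x : A α), sInv α (T.s α x) = x)
    (hsInv₂ : ∀ (α : π) (x : A α⁻¹), T.s α (sInv α x) = x)
    (α : π) :
    drinfeld k π A T Q α *
        (LinearMap.mul' k (A α)
          ((TensorProduct.comm k (A α) (A α))
            (TensorProduct.map LinearMap.id (sInv α) (Q.Rinv α α⁻¹)))) = 1 ∧
    (LinearMap.mul' k (A α)
          ((TensorProduct.comm k (A α) (A α))
            (TensorProduct.map LinearMap.id (sInv α) (Q.Rinv α α⁻¹)))) *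
        drinfeld k π A T Q α = 1 := by
  open TProof in
  set ua := drinfeld k π A T Q α with hua
  set w := LinearMap.mul' k (A α)
    ((TensorProduct.comm k (A α) (A α))
      (TensorProduct.map LinearMap.id (sInv α) (Q.Rinv α α⁻¹))) with hwdef
  obtain ⟨S, hS⟩ := TensorProduct.exists_finset (Q.Rinv α α⁻¹)
  have hw : w = ∑ j ∈ S, sInv α j.2 * j.1 := by
    rw [hwdef, hS, map_sum, map_sum, map_sum]
    exact Finset.sum_congr rfl fun j _ => by simp
  have huw : ua * w = 1 := by
    calc ua * w = ∑ j ∈ S, ua * (sInv α j.2 * j.1) := by rw [hw, Finset.mul_sum]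
      _ = ∑ j ∈ S, Sφ T α j.2 * ua * j.1 := by
          refine Finset.sum_congr rfl fun j _ => ?_
          rw [← mul_assoc, hua, ua_comm T Q α (sInv α j.2)]
          have : Tm T α (sInv α j.2) = Sφ T α j.2 := by
            simp only [Tm, LinearMap.comp_apply, hsInv₂]
          rw [this]
      _ = Km T Q α (Q.Rinv α α⁻¹) := by
          rw [hS, map_sum]
          exact Finset.sum_congr rfl fun j _ => by rw [Km_tmul]
      _ = fm T α (Q.R α α⁻¹ * Q.Rinv α α⁻¹) := (fm_R_mul T Q α _).symm
      _ = fm T α 1 := by rw [Q.R_inv_right]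
      _ = 1 := by
          rw [Algebra.TensorProduct.one_def, fm_tmul, Sφ_one, one_mul]
  have htw : Tm T α w * ua = 1 := by
    rw [← ua_comm T Q α w]; exact huw
  have hwu : w * ua = 1 := by
    have hw2 : w = Tm T α w := by
      calc w = 1 * w := (one_mul w).symm
        _ = (Tm T α w * ua) * w := by rw [htw]
        _ = Tm T α w * (ua * w) := mul_assoc _ _ _
        _ = Tm T α w := by rw [huw, mul_one]
    rw [hw2]; exact htw
  exact ⟨huw, hwu⟩
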